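/- Let S, A, E, Ŝ be discrete random variables on a finite probability space, where Ŝ is a deterministic function of A, S takes values in a finite set of size M ≥ 2, and suppose: (i) P(Ŝ ≠ S) ≤ δ, and (ii) H(S|E) ≥ (1−δ)H(S), for some 0 < δ < 1/2. Then (1 − 2δ)·H(S) − h(δ) − δ·log₂ M ≤ I(S;A|E), where h is the binary entropy function. -/

import Mathlib

open Finset

structure FinProb (Ω : Type) [Fintype Ω] where
  p : Ω → ℝ
  nonneg : ∀ ω, 0 ≤ p ω
  sum_one : ∑ ω, p ω = 1

namespace FinProb

variable {Ω : Type} [Fintype Ω] (μ : FinProb Ω)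

/-- P(X = x) -/
noncomputable def prob {α : Type} [DecidableEq α] (X : Ω → α) (x : α) : ℝ :=
  ∑ ω, if X ω = x then μ.p ω else 0

/-- Shannon entropy (base 2) of a random variable. -/
noncomputable def H {α : Type} [Fintype α] [DecidableEq α] (X : Ω → α) : ℝ :=
  -∑ x, μ.prob X x * Real.logb 2 (μ.prob X x)

/-- Mutual information I(X;Y). -/
noncomputable def I {α β : Type} [Fintype α] [DecidableEq α] [Fintype β] [DecidableEq β]
    (X : Ω → α) (Y : Ω → β) : ℝ :=
  μ.H X + μ.H Y - μ.H (fun ω => (X ω, Y ω))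

/-- Conditional entropy H(X|Z). -/
noncomputable def condH {α γ : Type} [Fintype α] [DecidableEq α] [Fintype γ] [DecidableEq γ]
    (X : Ω → α) (Z : Ω → γ) : ℝ :=
  μ.H (fun ω => (X ω, Z ω)) - μ.H Z

/-- Conditional mutual information I(X;Y|Z). -/
noncomputable def condI {α β γ : Type} [Fintype α] [DecidableEq α] [Fintype β] [DecidableEq β]
    [Fintype γ] [DecidableEq γ] (X : Ω → α) (Y : Ω → β) (Z : Ω → γ) : ℝ :=
  μ.condH X Z + μ.condH Y Z - μ.condH (fun ω => (X ω, Y ω)) Z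

/-- X and Y are conditionally independent given Z. -/
def CondIndep {α β γ : Type} [DecidableEq α] [DecidableEq β] [DecidableEq γ]
    (X : Ω → α) (Y : Ω → β) (Z : Ω → γ) : Prop :=
  ∀ x y z, μ.prob (fun ω => (X ω, Y ω, Z ω)) (x, y, z) * μ.prob Z z
    = μ.prob (fun ω => (X ω, Z ω)) (x, z) * μ.prob (fun ω => (Y ω, Z ω)) (y, z)

/-- X and Y are independent. -/
def Indep {α β : Type} [DecidableEq α] [DecidableEq β] (X : Ω → α) (Y : Ω → β) : Prop :=
  ∀ x y, μ.prob (fun ω => (X ω, Y ω)) (x, y) = μ.prob X x * μ.prob Y y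

end FinProb

/-- Binary entropy function (base 2). -/
noncomputable def binEnt (x : ℝ) : ℝ := -x * Real.logb 2 x - (1 - x) * Real.logb 2 (1 - x)

namespace FinProb

variable {Ω : Type} [Fintype Ω] (μ : FinProb Ω)

lemma prob_nonneg' {α : Type} [DecidableEq α] (X : Ω → α) (x : α) : 0 ≤ μ.prob X x :=
  Finset.sum_nonneg fun ω _ => by by_cases h : X ω = x <;> simp [h, μ.nonneg ω]

lemma prob_le_one {α : Type} [DecidableEq α] (X : Ω → α) (x : α) : μ.prob X x ≤ 1 := by
  rw [← μ.sum_one]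
  exact Finset.sum_le_sum fun ω _ => by by_cases h : X ω = x <;> simp [h, μ.nonneg ω]

lemma sum_prob_mul {α : Type} [Fintype α] [DecidableEq α] (X : Ω → α) (f : α → ℝ) :
    ∑ x, μ.prob X x * f x = ∑ ω, μ.p ω * f (X ω) := by
  unfold prob
  simp_rw [Finset.sum_mul, ite_mul, zero_mul]
  rw [Finset.sum_comm]
  refine Finset.sum_congr rfl fun ω _ => ?_
  rw [Finset.sum_ite_eq univ (X ω) (fun x => μ.p ω * f x)]
  simp

lemma sum_prob {α : Type} [Fintype α] [DecidableEq α] (X : Ω → α) :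
    ∑ x, μ.prob X x = 1 := by
  have := μ.sum_prob_mul X (fun _ => 1)
  simpa [μ.sum_one] using this

lemma prob_mono {α β : Type} [DecidableEq α] [DecidableEq β] (X : Ω → α) (Y : Ω → β)
    (x : α) (y : β) (h : ∀ ω, X ω = x → Y ω = y) : μ.prob X x ≤ μ.prob Y y := by
  refine Finset.sum_le_sum fun ω _ => ?_
  by_cases hx : X ω = x
  · simp [hx, h ω hx]
  · by_cases hy : Y ω = y <;> simp [hx, hy, μ.nonneg ω]

lemma H_alt {α : Type} [Fintype α] [DecidableEq α] (X : Ω → α) :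
    μ.H X = -∑ ω, μ.p ω * Real.logb 2 (μ.prob X (X ω)) := by
  rw [H, μ.sum_prob_mul X (fun x => Real.logb 2 (μ.prob X x))]

lemma prob_comp_inj {α β : Type} [DecidableEq α] [DecidableEq β] (X : Ω → α) (f : α → β)
    (hf : Function.Injective f) (x : α) :
    μ.prob (fun ω => f (X ω)) (f x) = μ.prob X x := by
  unfold prob
  refine Finset.sum_congr rfl fun ω _ => ?_
  simp [hf.eq_iff]

lemma H_comp_inj {α β : Type} [Fintype α] [DecidableEq α] [Fintype β] [DecidableEq β]
    (X : Ω → α) (f : α → β) (hf : Function.Injective f) :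
    μ.H (fun ω => f (X ω)) = μ.H X := by
  rw [H_alt, H_alt]
  congr 1
  refine Finset.sum_congr rfl fun ω _ => ?_
  rw [μ.prob_comp_inj X f hf (X ω)]

lemma H_nonneg {α : Type} [Fintype α] [DecidableEq α] (X : Ω → α) : 0 ≤ μ.H X := by
  rw [H, ← Finset.sum_neg_distrib]
  refine Finset.sum_nonneg fun x _ => ?_
  have h0 := μ.prob_nonneg' X x
  have h1 := μ.prob_le_one X x
  have : Real.logb 2 (μ.prob X x) ≤ 0 := Real.logb_nonpos (by norm_num) h0 h1
  nlinarith

lemma marg_fst {α γ : Type} [Fintype α] [DecidableEq α] [DecidableEq γ]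
    (X : Ω → α) (Z : Ω → γ) (z : γ) :
    ∑ x, μ.prob (fun ω => (X ω, Z ω)) (x, z) = μ.prob Z z := by
  unfold prob
  rw [Finset.sum_comm]
  refine Finset.sum_congr rfl fun ω _ => ?_
  simp only [Prod.mk.injEq, ite_and]
  rw [Finset.sum_ite_eq univ (X ω)]
  simp

end FinProb

lemma gibbs {ι : Type} [Fintype ι] (p q : ι → ℝ) (hp : ∀ i, 0 ≤ p i) (hq : ∀ i, 0 ≤ q i)
    (hpq : ∀ i, q i = 0 → p i = 0) (hp1 : ∑ i, p i = 1) (hq1 : ∑ i, q i ≤ 1) :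
    -∑ i, p i * Real.logb 2 (p i) ≤ -∑ i, p i * Real.logb 2 (q i) := by
  have hlog2 : (0:ℝ) < Real.log 2 := Real.log_pos (by norm_num)
  have key : ∀ i, p i * Real.logb 2 (q i) - p i * Real.logb 2 (p i)
      ≤ (q i - p i) / Real.log 2 := by
    intro i
    rcases eq_or_lt_of_le (hp i) with h | h
    · rw [← h]
      simp only [zero_mul, sub_zero, zero_sub]
      have : 0 ≤ q i / Real.log 2 := div_nonneg (hq i) (le_of_lt hlog2)
      linarith
    · have hqi : 0 < q i := lt_of_le_of_ne (hq i) fun h' => by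
        have := hpq i h'.symm; linarith
      have hlog : Real.log (q i / p i) ≤ q i / p i - 1 :=
        Real.log_le_sub_one_of_pos (by positivity)
      rw [Real.log_div (ne_of_gt hqi) (ne_of_gt h)] at hlog
      unfold Real.logb
      rw [← mul_div_assoc, ← mul_div_assoc, ← sub_div, div_le_div_iff_of_pos_right hlog2,
        ← mul_sub]
      calc p i * (Real.log (q i) - Real.log (p i)) ≤ p i * (q i / p i - 1) :=
            mul_le_mul_of_nonneg_left hlog (le_of_lt h)
        _ = q i - p i := by field_simp
  have hsum : ∑ i, (p i * Real.logb 2 (q i) - p i * Real.logb 2 (p i))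
      ≤ ∑ i, (q i - p i) / Real.log 2 := Finset.sum_le_sum fun i _ => key i
  rw [Finset.sum_sub_distrib] at hsum
  have : ∑ i, (q i - p i) / Real.log 2 ≤ 0 := by
    rw [← Finset.sum_div, Finset.sum_sub_distrib, hp1]
    apply div_nonpos_of_nonpos_of_nonneg <;> linarith
  linarith

lemma sum_triple {α β γ : Type} [Fintype α] [Fintype β] [Fintype γ]
    (f : α × β × γ → ℝ) : ∑ i, f i = ∑ z, ∑ x, ∑ y, f (x, y, z) := by
  let e : (γ × α × β) ≃ (α × β × γ) :=
    ⟨fun j => (j.2.1, j.2.2, j.1), fun i => (i.2.2, i.1, i.2.1),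
      fun j => rfl, fun i => rfl⟩
  rw [← Equiv.sum_comp e f, Fintype.sum_prod_type]
  refine Finset.sum_congr rfl fun z _ => ?_
  rw [Fintype.sum_prod_type]
  refine Finset.sum_congr rfl fun x _ => Finset.sum_congr rfl fun y _ => ?_
  simp only [e, Equiv.coe_fn_mk]

namespace FinProb

variable {Ω : Type} [Fintype Ω] (μ : FinProb Ω)

/-- Strong subadditivity. -/
lemma SSA {α β γ : Type} [Fintype α] [DecidableEq α] [Fintype β] [DecidableEq β]
    [Fintype γ] [DecidableEq γ] (X : Ω → α) (Y : Ω → β) (Z : Ω → γ) :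
    μ.H (fun ω => (X ω, Y ω, Z ω)) + μ.H Z
      ≤ μ.H (fun ω => (X ω, Z ω)) + μ.H (fun ω => (Y ω, Z ω)) := by
  classical
  set W : Ω → α × β × γ := fun ω => (X ω, Y ω, Z ω) with hW
  set pXZ : α × γ → ℝ := μ.prob (fun ω => (X ω, Z ω)) with hpXZ
  set pYZ : β × γ → ℝ := μ.prob (fun ω => (Y ω, Z ω)) with hpYZ
  set pZ : γ → ℝ := μ.prob Z with hpZ
  set P : α × β × γ → ℝ := μ.prob W with hP
  set Q : α × β × γ → ℝ := fun i =>
    if pZ i.2.2 = 0 then 0 else pXZ (i.1, i.2.2) * pYZ (i.2.1, i.2.2) / pZ i.2.2 with hQ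
  have hPz : ∀ i : α × β × γ, P i ≤ pZ i.2.2 := by
    rintro ⟨x, y, z⟩
    exact μ.prob_mono W Z (x, y, z) z (fun ω h => by
      simp only [hW, Prod.mk.injEq] at h; exact h.2.2)
  have hPxz : ∀ i : α × β × γ, P i ≤ pXZ (i.1, i.2.2) := by
    rintro ⟨x, y, z⟩
    exact μ.prob_mono W _ (x, y, z) (x, z) (fun ω h => by
      simp only [hW, Prod.mk.injEq] at h; simp [h.1, h.2.2])
  have hPyz : ∀ i : α × β × γ, P i ≤ pYZ (i.2.1, i.2.2) := by
    rintro ⟨x, y, z⟩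
    exact μ.prob_mono W _ (x, y, z) (y, z) (fun ω h => by
      simp only [hW, Prod.mk.injEq] at h; simp [h.2.1, h.2.2])
  have hp : ∀ i, 0 ≤ P i := fun i => μ.prob_nonneg' W i
  have hq : ∀ i, 0 ≤ Q i := by
    intro i
    simp only [hQ]
    split
    · exact le_refl 0
    · rename_i hz
      have h0 : 0 ≤ pZ i.2.2 := μ.prob_nonneg' Z _
      have := μ.prob_nonneg' (fun ω => (X ω, Z ω)) (i.1, i.2.2)
      have := μ.prob_nonneg' (fun ω => (Y ω, Z ω)) (i.2.1, i.2.2)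
      positivity
  have hpq : ∀ i, Q i = 0 → P i = 0 := by
    intro i hQi
    simp only [hQ] at hQi
    by_cases hz : pZ i.2.2 = 0
    · have := hPz i
      have := hp i
      linarith [hz ▸ this]
    · rw [if_neg hz] at hQi
      have hnum : pXZ (i.1, i.2.2) * pYZ (i.2.1, i.2.2) = 0 := by
        field_simp at hQi
        rw [mul_zero] at hQi
        exact hQi
      rcases mul_eq_zero.mp hnum with h | h
      · have := hPxz i; have := hp i; linarith [h ▸ this]
      · have := hPyz i; have := hp i; linarith [h ▸ this]
  have hp1 : ∑ i, P i = 1 := μ.sum_prob W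
  have hq1 : ∑ i, Q i ≤ 1 := by
    rw [sum_triple Q]
    have step : ∀ z, (∑ x, ∑ y, Q (x, y, z)) = if pZ z = 0 then 0 else pZ z := by
      intro z
      by_cases hz : pZ z = 0
      · simp [hQ, hz]
      · rw [if_neg hz]
        simp only [hQ, if_neg hz]
        have inner : ∀ x, ∑ y, pXZ (x, z) * pYZ (y, z) / pZ z
            = pXZ (x, z) := by
          intro x
          rw [← Finset.sum_div, ← Finset.mul_sum, hpYZ, μ.marg_fst Y Z z]
          field_simp
          rfl
        simp_rw [inner]
        exact μ.marg_fst X Z z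
      
    simp_rw [step]
    rw [← μ.sum_prob Z]
    refine Finset.sum_le_sum fun z _ => ?_
    split
    · exact μ.prob_nonneg' Z z
    · exact le_refl _
  have hgibbs := gibbs P Q hp hq hpq hp1 hq1
  have hHW : μ.H W = -∑ i, P i * Real.logb 2 (P i) := rfl
  have hterm : ∀ i, P i * Real.logb 2 (Q i)
      = P i * Real.logb 2 (pXZ (i.1, i.2.2)) + P i * Real.logb 2 (pYZ (i.2.1, i.2.2))
        - P i * Real.logb 2 (pZ i.2.2) := by
    intro i
    rcases eq_or_lt_of_le (hp i) with h | h
    · rw [← h]; ring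
    · have hz : 0 < pZ i.2.2 := lt_of_lt_of_le h (hPz i)
      have hx : 0 < pXZ (i.1, i.2.2) := lt_of_lt_of_le h (hPxz i)
      have hy : 0 < pYZ (i.2.1, i.2.2) := lt_of_lt_of_le h (hPyz i)
      simp only [hQ, if_neg (ne_of_gt hz)]
      rw [Real.logb_div (by positivity) (ne_of_gt hz),
        Real.logb_mul (ne_of_gt hx) (ne_of_gt hy)]
      ring
  have hsplit : ∑ i, P i * Real.logb 2 (Q i)
      = ∑ i, P i * Real.logb 2 (pXZ (i.1, i.2.2))
        + ∑ i, P i * Real.logb 2 (pYZ (i.2.1, i.2.2))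
        - ∑ i, P i * Real.logb 2 (pZ i.2.2) := by
    rw [← Finset.sum_add_distrib, ← Finset.sum_sub_distrib]
    exact Finset.sum_congr rfl fun i _ => hterm i
  have e1 : ∑ i, P i * Real.logb 2 (pXZ (i.1, i.2.2)) = -μ.H (fun ω => (X ω, Z ω)) := by
    rw [hP, μ.sum_prob_mul W (fun i => Real.logb 2 (pXZ (i.1, i.2.2))), H,
      μ.sum_prob_mul (fun ω => (X ω, Z ω)) (fun j => Real.logb 2 (pXZ j))]
    simp [hW]
  have e2 : ∑ i, P i * Real.logb 2 (pYZ (i.2.1, i.2.2)) = -μ.H (fun ω => (Y ω, Z ω)) := by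
    rw [hP, μ.sum_prob_mul W (fun i => Real.logb 2 (pYZ (i.2.1, i.2.2))), H,
      μ.sum_prob_mul (fun ω => (Y ω, Z ω)) (fun j => Real.logb 2 (pYZ j))]
    simp [hW]
  have e3 : ∑ i, P i * Real.logb 2 (pZ i.2.2) = -μ.H Z := by
    rw [hP, μ.sum_prob_mul W (fun i => Real.logb 2 (pZ i.2.2)), H,
      μ.sum_prob_mul Z (fun j => Real.logb 2 (pZ j))]
    simp [hW]
  rw [hsplit, e1, e2, e3] at hgibbs
  have hHW' : μ.H W = -∑ i, P i * Real.logb 2 (P i) := rfl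
  linarith

lemma fano {S : Type} [Fintype S] [DecidableEq S] (s f : Ω → S) (δ : ℝ)
    (hδ0 : 0 < δ) (hδ1 : δ < 1 / 2) (hM : 2 ≤ Fintype.card S)
    (hrel : (∑ ω, if s ω = f ω then 0 else μ.p ω) ≤ δ) :
    μ.condH s f ≤ binEnt δ + δ * Real.logb 2 (Fintype.card S) := by
  classical
  set M : ℝ := (Fintype.card S : ℝ) with hMdef
  have hM2 : (2:ℝ) ≤ M := by rw [hMdef]; exact_mod_cast hM
  have hM0 : 0 < M := by linarith
  have h1δ : 0 < 1 - δ := by linarith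
  have hδM : 0 < δ / M := by positivity
  set W : Ω → S × S := fun ω => (s ω, f ω) with hW
  set P : S × S → ℝ := μ.prob W with hP
  set Q : S × S → ℝ := fun i => μ.prob f i.2 * (if i.1 = i.2 then 1 - δ else δ / M) with hQ
  have hPf : ∀ i : S × S, P i ≤ μ.prob f i.2 := by
    rintro ⟨x, y⟩
    exact μ.prob_mono W f (x, y) y (fun ω h => by
      simp only [hW, Prod.mk.injEq] at h; exact h.2)
  have hp : ∀ i, 0 ≤ P i := fun i => μ.prob_nonneg' W i
  have hq : ∀ i, 0 ≤ Q i := by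
    intro i
    have := μ.prob_nonneg' f i.2
    simp only [hQ]
    split <;> positivity
  have hpq : ∀ i, Q i = 0 → P i = 0 := by
    intro i hQi
    simp only [hQ] at hQi
    have hf0 : μ.prob f i.2 = 0 := by
      rcases mul_eq_zero.mp hQi with h | h
      · exact h
      · split at h <;> linarith
    have := hPf i
    have := hp i
    linarith [hf0 ▸ hPf i]
  have hp1 : ∑ i, P i = 1 := μ.sum_prob W
  have hq1 : ∑ i, Q i ≤ 1 := by
    rw [Fintype.sum_prod_type_right]
    have inner : ∀ y, ∑ x, Q (x, y) = μ.prob f y * (1 - δ / M) := by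
      intro y
      simp only [hQ]
      rw [← Finset.mul_sum]
      congr 1
      have : ∀ x : S, (if x = y then 1 - δ else δ / M)
          = (if x = y then 1 - δ - δ / M else 0) + δ / M := by
        intro x; split <;> ring
      simp_rw [this, Finset.sum_add_distrib, Finset.sum_ite_eq' univ y]
      simp only [Finset.mem_univ, if_true, Finset.sum_const, Finset.card_univ,
        nsmul_eq_mul]
      rw [← hMdef]
      field_simp
      ring
    simp_rw [inner]
    calc ∑ y, μ.prob f y * (1 - δ / M) ≤ ∑ y, μ.prob f y * 1 := by
          refine Finset.sum_le_sum fun y _ => ?_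
          have := μ.prob_nonneg' f y
          nlinarith
      _ = 1 := by simpa using μ.sum_prob f
  have hgibbs := gibbs P Q hp hq hpq hp1 hq1
  set L1 : ℝ := Real.logb 2 (1 - δ) with hL1
  set L2 : ℝ := Real.logb 2 (δ / M) with hL2
  have hterm : ∀ i, P i * Real.logb 2 (Q i)
      = P i * Real.logb 2 (μ.prob f i.2) + P i * (if i.1 = i.2 then L1 else L2) := by
    intro i
    rcases eq_or_lt_of_le (hp i) with h | h
    · rw [← h]; ring
    · have hf : 0 < μ.prob f i.2 := lt_of_lt_of_le h (hPf i)
      have hpos : (if i.1 = i.2 then 1 - δ else δ / M) > 0 := by split <;> linarith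
      simp only [hQ]
      rw [Real.logb_mul (ne_of_gt hf) (ne_of_gt hpos), mul_add]
      congr 1
      rw [apply_ite (Real.logb 2)]
  have hsplit : ∑ i, P i * Real.logb 2 (Q i)
      = ∑ i, P i * Real.logb 2 (μ.prob f i.2) + ∑ i, P i * (if i.1 = i.2 then L1 else L2) := by
    rw [← Finset.sum_add_distrib]
    exact Finset.sum_congr rfl fun i _ => hterm i
  have e1 : ∑ i, P i * Real.logb 2 (μ.prob f i.2) = -μ.H f := by
    rw [hP, μ.sum_prob_mul W (fun i => Real.logb 2 (μ.prob f i.2)), H,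
      μ.sum_prob_mul f (fun j => Real.logb 2 (μ.prob f j))]
    simp [hW]
  set Pe : ℝ := ∑ ω, if s ω = f ω then 0 else μ.p ω with hPe
  have e2 : ∑ i, P i * (if i.1 = i.2 then L1 else L2) = (1 - Pe) * L1 + Pe * L2 := by
    rw [hP, μ.sum_prob_mul W (fun i => if i.1 = i.2 then L1 else L2)]
    have : ∀ ω, μ.p ω * (if (W ω).1 = (W ω).2 then L1 else L2)
        = L1 * (if s ω = f ω then μ.p ω else 0) + L2 * (if s ω = f ω then 0 else μ.p ω) := by
      intro ω
      simp only [hW]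
      by_cases h : s ω = f ω <;> simp [h] <;> ring
    simp_rw [this, Finset.sum_add_distrib, ← Finset.mul_sum]
    have hC : (∑ ω, if s ω = f ω then μ.p ω else 0) = 1 - Pe := by
      rw [hPe, ← μ.sum_one, ← Finset.sum_sub_distrib]
      refine Finset.sum_congr rfl fun ω _ => ?_
      by_cases h : s ω = f ω <;> simp [h]
    rw [hC]
    ring
  have hPe_nonneg : 0 ≤ Pe :=
    Finset.sum_nonneg fun ω _ => by by_cases h : s ω = f ω <;> simp [h, μ.nonneg ω]
  -- Gibbs conclusion: H(s,f) ≤ μ.H f - (1-Pe)*L1 - Pe*L2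
  have hHW : μ.H W = -∑ i, P i * Real.logb 2 (P i) := rfl
  have hbound : μ.condH s f ≤ -(1 - Pe) * L1 - Pe * L2 := by
    have : μ.H W ≤ μ.H f - (1 - Pe) * L1 - Pe * L2 := by
      rw [hHW]
      rw [hsplit, e1, e2] at hgibbs
      linarith
    have hconf : μ.condH s f = μ.H W - μ.H f := rfl
    linarith
  -- now bound the linear function of Pe
  have hLM : 0 ≤ Real.logb 2 M := Real.logb_nonneg (by norm_num) (by linarith)
  have hL2' : L2 = Real.logb 2 δ - Real.logb 2 M :=
    Real.logb_div (ne_of_gt hδ0) (ne_of_gt hM0)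
  have hmono : Real.logb 2 δ ≤ L1 :=
    Real.logb_le_logb_of_le (by norm_num) hδ0 (by linarith)
  have hc : 0 ≤ L1 - Real.logb 2 δ + Real.logb 2 M := by linarith
  have hlin : -(1 - Pe) * L1 - Pe * L2 ≤ -(1 - δ) * L1 - δ * L2 := by
    rw [hL2']
    have := mul_le_mul_of_nonneg_right hrel hc
    nlinarith [hrel, hc]
  have hfinal : -(1 - δ) * L1 - δ * L2 = binEnt δ + δ * Real.logb 2 M := by
    rw [hL2', binEnt, hL1]
    ring
  linarith

end FinProb

theorem stmt9 {Ω S A E : Type} [Fintype Ω] [Fintype S] [DecidableEq S]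
    [Fintype A] [DecidableEq A] [Fintype E] [DecidableEq E]
    (μ : FinProb Ω) (s : Ω → S) (a : Ω → A) (e : Ω → E) (dec : A → S) (δ : ℝ)
    (hM : 2 ≤ Fintype.card S)
    (hδ0 : 0 < δ) (hδ1 : δ < 1 / 2)
    (hrel : (∑ ω, if dec (a ω) ≠ s ω then μ.p ω else 0) ≤ δ)
    (hsec : (1 - δ) * μ.H s ≤ μ.condH s e) :
    (1 - 2 * δ) * μ.H s - binEnt δ - δ * Real.logb 2 (Fintype.card S)
      ≤ μ.condI s a e := by
  classical
  -- conditional mutual information identity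
  have c1 : μ.condI s a e = μ.condH s e + (μ.H (fun ω => (a ω, e ω)) - μ.H e)
      - (μ.H (fun ω => ((s ω, a ω), e ω)) - μ.H e) := rfl
  -- reassociation
  have eq1 : μ.H (fun ω => (s ω, (a ω, e ω))) = μ.H (fun ω => ((s ω, a ω), e ω)) := by
    refine μ.H_comp_inj (fun ω => ((s ω, a ω), e ω)) (fun i => (i.1.1, (i.1.2, i.2))) ?_
    rintro ⟨⟨x, y⟩, z⟩ ⟨⟨x', y'⟩, z'⟩ h
    simp only [Prod.mk.injEq] at h ⊢
    tauto
  -- first SSA application : H(S|A,E) ≤ H(S|A)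
  have ssa1 : μ.H (fun ω => (s ω, e ω, a ω)) + μ.H a
      ≤ μ.H (fun ω => (s ω, a ω)) + μ.H (fun ω => (e ω, a ω)) := μ.SSA s e a
  have eq2 : μ.H (fun ω => (s ω, e ω, a ω)) = μ.H (fun ω => (s ω, (a ω, e ω))) := by
    refine (μ.H_comp_inj (fun ω => (s ω, e ω, a ω)) (fun i => (i.1, (i.2.2, i.2.1))) ?_).symm
    rintro ⟨x, y, z⟩ ⟨x', y', z'⟩ h
    simp only [Prod.mk.injEq] at h ⊢
    tauto
  have eq3 : μ.H (fun ω => (e ω, a ω)) = μ.H (fun ω => (a ω, e ω)) := by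
    refine (μ.H_comp_inj (fun ω => (e ω, a ω)) (fun i => (i.2, i.1)) ?_).symm
    rintro ⟨x, y⟩ ⟨x', y'⟩ h
    simp only [Prod.mk.injEq] at h ⊢
    tauto
  -- second SSA application : H(S|A) ≤ H(S|Ŝ)
  have ssa2 : μ.H (fun ω => (s ω, a ω, dec (a ω))) + μ.H (fun ω => dec (a ω))
      ≤ μ.H (fun ω => (s ω, dec (a ω))) + μ.H (fun ω => (a ω, dec (a ω))) :=
    μ.SSA s a (fun ω => dec (a ω))
  have eq4 : μ.H (fun ω => (s ω, a ω, dec (a ω))) = μ.H (fun ω => (s ω, a ω)) := by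
    refine μ.H_comp_inj (fun ω => (s ω, a ω)) (fun i => (i.1, i.2, dec i.2)) ?_
    rintro ⟨x, y⟩ ⟨x', y'⟩ h
    simp only [Prod.mk.injEq] at h ⊢
    tauto
  have eq5 : μ.H (fun ω => (a ω, dec (a ω))) = μ.H a := by
    refine μ.H_comp_inj a (fun y => (y, dec y)) ?_
    rintro y y' h
    simp only [Prod.mk.injEq] at h
    exact h.1
  -- Fano
  have hrel' : (∑ ω, if s ω = dec (a ω) then 0 else μ.p ω) ≤ δ := by
    refine le_trans (le_of_eq ?_) hrel
    refine Finset.sum_congr rfl fun ω _ => ?_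
    by_cases h : dec (a ω) = s ω
    · rw [if_pos h.symm, if_neg (by simp [h])]
    · have h' : ¬ s ω = dec (a ω) := fun hh => h hh.symm
      simp [h, h']
  have hfano : μ.condH s (fun ω => dec (a ω))
      ≤ binEnt δ + δ * Real.logb 2 (Fintype.card S) :=
    μ.fano s (fun ω => dec (a ω)) δ hδ0 hδ1 hM hrel'
  have hfano' : μ.H (fun ω => (s ω, dec (a ω))) - μ.H (fun ω => dec (a ω))
      ≤ binEnt δ + δ * Real.logb 2 (Fintype.card S) := hfano
  have hHs : 0 ≤ μ.H s := μ.H_nonneg s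
  have hδHs : 0 ≤ δ * μ.H s := mul_nonneg (le_of_lt hδ0) hHs
  linarith
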